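/- For every integer n ≥ 1, in the algebra B_n the elements u and v satisfy: u·u = 2u, v·v = 2v, u·v = 0, u + v = e + f, (u|v) = 0, 2(u|u) = c⁰_n and 2(v|v) = c⁰_{n+1}, where c⁰_m = 1 − 6/((m+2)(m+3)). That is, u and v are mutually orthogonal Virasoro vectors of central charges c⁰_n and c⁰_{n+1} in the Griess algebra of A(1/2, c¹_n). -/

import Mathlib

open Matrix

/-- The basis vector `e` (the Ising vector) of the Griess algebra `B_n` of `A(1/2, c¹_n)`. -/
noncomputable def Be : Fin 3 → ℂ := ![1, 0, 0]

/-- The basis vector `f` of the Griess algebra `B_n`. -/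
noncomputable def Bf : Fin 3 → ℂ := ![0, 1, 0]

/-- The basis vector `x` of the Griess algebra `B_n`. -/
noncomputable def Bx : Fin 3 → ℂ := ![0, 0, 1]

/-- The commutative product of the Griess algebra `B_n` of `A(1/2, c¹_n)`, written in
coordinates with respect to the basis `{e, f, x}`: it is determined by
`e·e = 2e`, `f·f = 2f`, `e·f = 0`, `e·x = (1/2)x`, `f·x = (3/2)x`,
`x·x = 2n(n+6)e + 2(n+2)(n+4)f`. -/
noncomputable def Bmul (n : ℕ) (a b : Fin 3 → ℂ) : Fin 3 → ℂ :=
  ![2 * a 0 * b 0 + 2 * (n : ℂ) * ((n : ℂ) + 6) * a 2 * b 2,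
    2 * a 1 * b 1 + 2 * ((n : ℂ) + 2) * ((n : ℂ) + 4) * a 2 * b 2,
    (1 / 2) * (a 0 * b 2 + a 2 * b 0) + (3 / 2) * (a 1 * b 2 + a 2 * b 1)]

/-- The invariant symmetric bilinear form of the Griess algebra `B_n`, determined by
`(e|e) = 1/4`, `(f|f) = (3/4)(1 − 8/((n+2)(n+4)))`, `(x|x) = n(n+6)`,
`(e|f) = (e|x) = (f|x) = 0`. -/
noncomputable def Bform (n : ℕ) (a b : Fin 3 → ℂ) : ℂ :=
  (1 / 4) * a 0 * b 0 + (3 / 4) * (1 - 8 / (((n : ℂ) + 2) * ((n : ℂ) + 4))) * a 1 * b 1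
    + (n : ℂ) * ((n : ℂ) + 6) * a 2 * b 2

/-- The Virasoro vector `u = (1/(2(n+3)))(n e + (n+4) f + x)` of `B_n`. -/
noncomputable def Bu (n : ℕ) : Fin 3 → ℂ :=
  (1 / (2 * ((n : ℂ) + 3))) • ((n : ℂ) • Be + ((n : ℂ) + 4) • Bf + Bx)

/-- The Virasoro vector `v = e + f − u` of `B_n`. -/
noncomputable def Bv (n : ℕ) : Fin 3 → ℂ := Be + Bf - Bu n

/-- The involution `σ` of `B_n`: `σ(e) = e`, `σ(f) = f`, `σ(x) = −x`. -/
noncomputable def Bsigma : (Fin 3 → ℂ) → (Fin 3 → ℂ) := fun a => ![a 0, a 1, -a 2]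

set_option maxHeartbeats 1000000 in
theorem stmt_8 (n : ℕ) (hn : 1 ≤ n) :
    Bmul n (Bu n) (Bu n) = (2 : ℂ) • Bu n ∧
    Bmul n (Bv n) (Bv n) = (2 : ℂ) • Bv n ∧
    Bmul n (Bu n) (Bv n) = 0 ∧
    Bu n + Bv n = Be + Bf ∧
    Bform n (Bu n) (Bv n) = 0 ∧
    2 * Bform n (Bu n) (Bu n) = 1 - 6 / (((n : ℂ) + 2) * ((n : ℂ) + 3)) ∧
    2 * Bform n (Bv n) (Bv n) = 1 - 6 / (((n : ℂ) + 3) * ((n : ℂ) + 4)) := by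
  have h2 : ((n : ℂ) + 2) ≠ 0 := by
    have : ((n + 2 : ℕ) : ℂ) ≠ 0 := Nat.cast_ne_zero.mpr (by omega)
    push_cast at this; exact this
  have h3 : ((n : ℂ) + 3) ≠ 0 := by
    have : ((n + 3 : ℕ) : ℂ) ≠ 0 := Nat.cast_ne_zero.mpr (by omega)
    push_cast at this; exact this
  have h4 : ((n : ℂ) + 4) ≠ 0 := by
    have : ((n + 4 : ℕ) : ℂ) ≠ 0 := Nat.cast_ne_zero.mpr (by omega)
    push_cast at this; exact this
  have hd : (2 * ((n : ℂ) + 3)) ≠ 0 := mul_ne_zero two_ne_zero h3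
  have hD : (1152 + (n : ℂ) * 1632 + (n : ℂ) ^ 2 * 848 + (n : ℂ) ^ 3 * 192
      + (n : ℂ) ^ 4 * 16) ≠ 0 := by
    have h : (1152 + (n : ℂ) * 1632 + (n : ℂ) ^ 2 * 848 + (n : ℂ) ^ 3 * 192
        + (n : ℂ) ^ 4 * 16)
        = 16 * (((n : ℂ) + 2) * (((n : ℂ) + 3) ^ 2 * ((n : ℂ) + 4))) := by ring
    rw [h]
    exact mul_ne_zero (by norm_num)
      (mul_ne_zero h2 (mul_ne_zero (pow_ne_zero 2 h3) h4))
  have hD' : (1152 + (n : ℂ) * 1632 + (n : ℂ) ^ 2 * 848 + (n : ℂ) ^ 3 * 192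
      + (n : ℂ) ^ 4 * 16) * (1152 + (n : ℂ) * 1632 + (n : ℂ) ^ 2 * 848
      + (n : ℂ) ^ 3 * 192 + (n : ℂ) ^ 4 * 16)⁻¹ = 1 := mul_inv_cancel₀ hD
  have hu0 : Bu n 0 = (n : ℂ) / (2 * ((n : ℂ) + 3)) := by
    show (1 / (2 * ((n : ℂ) + 3))) * ((n : ℂ) * 1 + ((n : ℂ) + 4) * 0 + 0) = _
    field_simp
    ring
  have hu1 : Bu n 1 = ((n : ℂ) + 4) / (2 * ((n : ℂ) + 3)) := by
    show (1 / (2 * ((n : ℂ) + 3))) * ((n : ℂ) * 0 + ((n : ℂ) + 4) * 1 + 0) = _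
    field_simp
    ring
  have hu2 : Bu n 2 = 1 / (2 * ((n : ℂ) + 3)) := by
    show (1 / (2 * ((n : ℂ) + 3))) * ((n : ℂ) * 0 + ((n : ℂ) + 4) * 0 + 1) = _
    ring
  have hv0 : Bv n 0 = 1 - (n : ℂ) / (2 * ((n : ℂ) + 3)) := by
    show (1 : ℂ) + 0 - Bu n 0 = _
    rw [hu0]; ring
  have hv1 : Bv n 1 = 1 - ((n : ℂ) + 4) / (2 * ((n : ℂ) + 3)) := by
    show (0 : ℂ) + 1 - Bu n 1 = _
    rw [hu1]; ring
  have hv2 : Bv n 2 = - (1 / (2 * ((n : ℂ) + 3))) := by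
    show (0 : ℂ) + 0 - Bu n 2 = _
    rw [hu2]; ring
  refine ⟨?_, ?_, ?_, ?_, ?_, ?_, ?_⟩
  · funext i; fin_cases i
    · show 2 * Bu n 0 * Bu n 0 + 2 * (n : ℂ) * ((n : ℂ) + 6) * Bu n 2 * Bu n 2
          = 2 * Bu n 0
      rw [hu0, hu2]; field_simp; ring
    · show 2 * Bu n 1 * Bu n 1 + 2 * ((n : ℂ) + 2) * ((n : ℂ) + 4) * Bu n 2 * Bu n 2
          = 2 * Bu n 1
      rw [hu1, hu2]; field_simp; ring
    · show (1 / 2) * (Bu n 0 * Bu n 2 + Bu n 2 * Bu n 0)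
          + (3 / 2) * (Bu n 1 * Bu n 2 + Bu n 2 * Bu n 1) = 2 * Bu n 2
      rw [hu0, hu1, hu2]; field_simp; ring
  · funext i; fin_cases i
    · show 2 * Bv n 0 * Bv n 0 + 2 * (n : ℂ) * ((n : ℂ) + 6) * Bv n 2 * Bv n 2
          = 2 * Bv n 0
      rw [hv0, hv2]; field_simp; ring
    · show 2 * Bv n 1 * Bv n 1 + 2 * ((n : ℂ) + 2) * ((n : ℂ) + 4) * Bv n 2 * Bv n 2
          = 2 * Bv n 1
      rw [hv1, hv2]; field_simp; ring
    · show (1 / 2) * (Bv n 0 * Bv n 2 + Bv n 2 * Bv n 0)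
          + (3 / 2) * (Bv n 1 * Bv n 2 + Bv n 2 * Bv n 1) = 2 * Bv n 2
      rw [hv1, hv0, hv2]; field_simp; ring
  · funext i; fin_cases i
    · show 2 * Bu n 0 * Bv n 0 + 2 * (n : ℂ) * ((n : ℂ) + 6) * Bu n 2 * Bv n 2 = 0
      rw [hu0, hu2, hv0, hv2]; field_simp; ring
    · show 2 * Bu n 1 * Bv n 1 + 2 * ((n : ℂ) + 2) * ((n : ℂ) + 4) * Bu n 2 * Bv n 2 = 0
      rw [hu1, hu2, hv1, hv2]; field_simp; ring
    · show (1 / 2) * (Bu n 0 * Bv n 2 + Bu n 2 * Bv n 0)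
          + (3 / 2) * (Bu n 1 * Bv n 2 + Bu n 2 * Bv n 1) = 0
      rw [hu0, hu1, hu2, hv0, hv1, hv2]; field_simp; ring
  · show Bu n + (Be + Bf - Bu n) = Be + Bf
    abel
  · show (1 / 4) * Bu n 0 * Bv n 0
        + (3 / 4) * (1 - 8 / (((n : ℂ) + 2) * ((n : ℂ) + 4))) * Bu n 1 * Bv n 1
        + (n : ℂ) * ((n : ℂ) + 6) * Bu n 2 * Bv n 2 = 0
    rw [hu0, hu1, hu2, hv0, hv1, hv2]; field_simp
    ring
  · show 2 * ((1 / 4) * Bu n 0 * Bu n 0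
        + (3 / 4) * (1 - 8 / (((n : ℂ) + 2) * ((n : ℂ) + 4))) * Bu n 1 * Bu n 1
        + (n : ℂ) * ((n : ℂ) + 6) * Bu n 2 * Bu n 2) = _
    rw [hu0, hu1, hu2]; field_simp
    ring
  · show 2 * ((1 / 4) * Bv n 0 * Bv n 0
        + (3 / 4) * (1 - 8 / (((n : ℂ) + 2) * ((n : ℂ) + 4))) * Bv n 1 * Bv n 1
        + (n : ℂ) * ((n : ℂ) + 6) * Bv n 2 * Bv n 2) = _
    rw [hv0, hv1, hv2]; field_simp
    ring
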